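/- Let R ⊆ Ω be two bounded d-dimensional convex polytopes in ℝ^d (a bounded convex polytope is a bounded intersection of finitely many closed half-spaces, here assumed to have nonempty interior). Suppose Ω contains a ball of radius r > 0 and Vol(R)/Vol(Ω) ≥ c for some constant c > 0, where Vol denotes d-dimensional Lebesgue measure. Then R contains a ball of radius rc/d. -/

import Mathlib

open MeasureTheory

/-- A bounded convex polytope in `ℝ^d`: a bounded intersection of finitely many closed
half-spaces. -/
def IsBoundedConvexPolytope {d : ℕ} (P : Set (EuclideanSpace ℝ (Fin d))) : Prop :=
  Bornology.IsBounded P ∧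
    ∃ (m : ℕ) (a : Fin m → EuclideanSpace ℝ (Fin d)) (b : Fin m → ℝ),
      P = {x | ∀ i, inner ℝ (a i) x ≤ b i}

open Metric Set in
lemma key_erosion {d m : ℕ} (a : Fin m → EuclideanSpace ℝ (Fin d))
    (b : Fin m → ℝ) (Ω : Set (EuclideanSpace ℝ (Fin d))) (hΩcl : IsClosed Ω) {ρ : ℝ} (hρ : 0 < ρ)
    (hRne : {x : EuclideanSpace ℝ (Fin d) | ∀ i, inner ℝ (a i) x ≤ b i}.Nonempty)
    (hempty : {y : EuclideanSpace ℝ (Fin d) | ∀ i, inner ℝ (a i) y + ρ * ‖a i‖ ≤ b i} = ∅) :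
    volume {y : EuclideanSpace ℝ (Fin d) | Metric.closedBall y ρ ⊆ Ω}
      ≤ volume (Ω \ {x | ∀ i, inner ℝ (a i) x ≤ b i}) := by
  classical
  set R : Set (EuclideanSpace ℝ (Fin d)) := {x | ∀ i, inner ℝ (a i) x ≤ b i} with hRdef
  set W : Set (EuclideanSpace ℝ (Fin d)) := {y | Metric.closedBall y ρ ⊆ Ω} with hWdef
  obtain ⟨x₁, hx₁⟩ := hRne
  have hb0 : ∀ i, a i = 0 → 0 ≤ b i := by
    intro i hi
    have := hx₁ i
    rwa [hi, inner_zero_left] at this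
  set I : Finset (Fin m) := Finset.univ.filter (fun i => a i ≠ 0) with hIdef
  -- every point violates some constraint with nonzero normal
  have hviol : ∀ y : EuclideanSpace ℝ (Fin d), ∃ i ∈ I, b i < inner ℝ (a i) y + ρ * ‖a i‖ := by
    intro y
    have hy : y ∉ ({y : EuclideanSpace ℝ (Fin d) | ∀ i, inner ℝ (a i) y + ρ * ‖a i‖ ≤ b i}) := by
      rw [hempty]; exact notMem_empty y
    simp only [mem_setOf_eq, not_forall, not_le] at hy
    obtain ⟨i, hi⟩ := hy
    refine ⟨i, ?_, hi⟩
    simp only [hIdef, Finset.mem_filter, Finset.mem_univ, true_and]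
    intro hai
    rw [hai, inner_zero_left, norm_zero, mul_zero, add_zero] at hi
    exact absurd (hb0 i hai) (not_le.2 hi)
  have hIne : I.Nonempty := by
    obtain ⟨i, hi, _⟩ := hviol 0
    exact ⟨i, hi⟩
  set u : Fin m → EuclideanSpace ℝ (Fin d) := fun i => (‖a i‖)⁻¹ • a i with hudef
  have hunorm : ∀ i ∈ I, ‖u i‖ = 1 := by
    intro i hi
    have hai : a i ≠ 0 := by simpa [hIdef] using hi
    have : ‖a i‖ ≠ 0 := norm_ne_zero_iff.2 hai
    simp [hudef, norm_smul, abs_of_nonneg (inv_nonneg.2 (norm_nonneg _)), inv_mul_cancel₀ this]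
  set v : Fin m → EuclideanSpace ℝ (Fin d) → ℝ := fun i y => inner ℝ (u i) y - b i / ‖a i‖ + ρ with hvdef
  -- v i y > 0 ↔ constraint i violated (for i ∈ I)
  have hvpos : ∀ y, ∀ i ∈ I, 0 < v i y ↔ b i < inner ℝ (a i) y + ρ * ‖a i‖ := by
    intro y i hi
    have hai : a i ≠ 0 := by simpa [hIdef] using hi
    have hn : (0:ℝ) < ‖a i‖ := norm_pos_iff.2 hai
    have hinner : (inner ℝ (u i) y : ℝ) = ‖a i‖⁻¹ * inner ℝ (a i) y := by
      simp only [hudef]; exact real_inner_smul_left _ _ _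
    have hfact : v i y = ‖a i‖⁻¹ * (inner ℝ (a i) y + ρ * ‖a i‖ - b i) := by
      rw [hvdef]
      simp only [hinner]
      field_simp
      ring
    rw [hfact, mul_pos_iff_of_pos_left (inv_pos.2 hn)]
    constructor <;> intro h <;> linarith
  set D : Fin m → Set (EuclideanSpace ℝ (Fin d)) := fun i =>
    (W ∩ {y | ∀ j ∈ I, v j y ≤ v i y}) ∩ {y | ∀ j ∈ I, j < i → v j y < v i y} with hDdef
  have hvcont : ∀ i, Continuous (v i) := by
    intro i
    rw [hvdef]
    exact ((Continuous.inner continuous_const continuous_id).sub continuous_const).add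
      continuous_const
  have hWcl : IsClosed W := by
    have hWeq : W = ⋂ z : (closedBall (0:EuclideanSpace ℝ (Fin d)) ρ),
        (fun y => y + (z:EuclideanSpace ℝ (Fin d))) ⁻¹' Ω := by
      ext y
      simp only [mem_iInter, mem_preimage, hWdef, mem_setOf_eq, Subtype.forall]
      constructor
      · intro h z hz
        apply h
        rw [mem_closedBall, dist_eq_norm]
        simpa using mem_closedBall_zero_iff.1 hz
      · intro h w hw
        have hww : w = y + (w - y) := by abel
        rw [hww]
        exact h (w - y) (mem_closedBall_zero_iff.2 (by
          rw [← dist_eq_norm]; exact mem_closedBall.1 hw))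
    rw [hWeq]
    exact isClosed_iInter fun z => hΩcl.preimage (continuous_add_right _)
  have hDmeas : ∀ i, MeasurableSet (D i) := by
    intro i
    refine (hWcl.measurableSet.inter ?_).inter ?_
    · have : {y | ∀ j ∈ I, v j y ≤ v i y} = ⋂ j ∈ (I : Set (Fin m)), {y | v j y ≤ v i y} := by
        ext y; simp
      rw [this]
      exact MeasurableSet.biInter I.countable_toSet fun j _ =>
        measurableSet_le (hvcont j).measurable (hvcont i).measurable
    · have : {y | ∀ j ∈ I, j < i → v j y < v i y}
          = ⋂ j ∈ ((I.filter (· < i)) : Set (Fin m)), {y | v j y < v i y} := by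
        ext y; simp only [mem_iInter, Finset.coe_filter, mem_setOf_eq, Finset.mem_coe]
        constructor
        · rintro h j ⟨hj, hji⟩; exact h j hj hji
        · intro h j hj hji; exact h j ⟨hj, hji⟩
      rw [this]
      exact MeasurableSet.biInter (I.filter (· < i)).countable_toSet fun j _ =>
        measurableSet_lt (hvcont j).measurable (hvcont i).measurable
  have hcover : W ⊆ ⋃ i ∈ I, D i := by
    intro y hy
    set F : Finset (Fin m) := I.filter (fun i => ∀ j ∈ I, v j y ≤ v i y) with hFdef
    have hFne : F.Nonempty := by
      obtain ⟨i₁, hi₁, hmax⟩ := I.exists_max_image (fun i => v i y) hIne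
      exact ⟨i₁, Finset.mem_filter.2 ⟨hi₁, hmax⟩⟩
    set i := F.min' hFne with hidef
    have hiF : i ∈ F := F.min'_mem hFne
    have hiI : i ∈ I := (Finset.mem_filter.1 hiF).1
    have himax : ∀ j ∈ I, v j y ≤ v i y := (Finset.mem_filter.1 hiF).2
    refine mem_biUnion hiI ⟨⟨hy, himax⟩, ?_⟩
    intro j hj hji
    by_contra hle
    push_neg at hle
    have hjF : j ∈ F := Finset.mem_filter.2 ⟨hj, fun k hk => le_trans (himax k hk) hle⟩
    exact absurd (F.min'_le j hjF) (not_le.2 hji)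
  have hDdisj : (I : Set (Fin m)).PairwiseDisjoint D := by
    have main : ∀ i ∈ I, ∀ j ∈ I, i < j → Disjoint (D i) (D j) := by
      intro i hi j hj hij
      refine Set.disjoint_left.2 fun y hyi hyj => ?_
      have h1 : v j y ≤ v i y := hyi.1.2 j hj
      have h2 : v i y < v j y := hyj.2 i hi hij
      linarith
    intro i hi j hj hij
    rcases lt_or_gt_of_ne hij with h | h
    · exact main i hi j hj h
    · exact (main j hj i hi h).symm
  set T : Fin m → Set (EuclideanSpace ℝ (Fin d)) := fun i =>
    (fun x => x - ρ • u i) ⁻¹' (D i) with hTdef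
  have hTmeas : ∀ i, MeasurableSet (T i) :=
    fun i => (hDmeas i).preimage (continuous_id.sub continuous_const).measurable
  have hTvol : ∀ i, volume (T i) = volume (D i) := by
    intro i
    have heq : (fun x : EuclideanSpace ℝ (Fin d) => x - ρ • u i)
        = fun x => x + (-(ρ • u i)) := by
      funext x; rw [sub_eq_add_neg]
    rw [hTdef]
    simp only [heq]
    exact measure_preimage_add_right volume _ _
  have hTdisj : (I : Set (Fin m)).PairwiseDisjoint T := by
    intro i hi' j hj' hij
    have hi : i ∈ I := hi'
    have hj : j ∈ I := hj'
    refine Set.disjoint_left.2 fun w hwi hwj => ?_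
    have hyi : w - ρ • u i ∈ D i := hwi
    have hyj : w - ρ • u j ∈ D j := hwj
    set y := w - ρ • u i with hydef
    set z := w - ρ • u j with hzdef
    have h1 : v j y ≤ v i y := hyi.1.2 j hj
    have h2 : v i z ≤ v j z := hyj.1.2 i hi
    have hyz : y - z = ρ • (u j - u i) := by
      rw [hydef, hzdef, smul_sub]; abel
    have hinn : (inner ℝ (u j - u i) (y - z) : ℝ) ≤ 0 := by
      simp only [inner_sub_left, inner_sub_right]
      have e1 : v j y - v i y ≤ 0 := by linarith
      have e2 : v i z - v j z ≤ 0 := by linarith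
      rw [hvdef] at e1 e2
      simp only at e1 e2
      linarith
    rw [hyz, real_inner_smul_right] at hinn
    have hself : (inner ℝ (u j - u i) (u j - u i) : ℝ) ≤ 0 := by
      nlinarith [hρ]
    have h0 : u j - u i = 0 :=
      inner_self_eq_zero.1 (le_antisymm hself real_inner_self_nonneg)
    have hyeqz : y = z := by
      have : y - z = 0 := by rw [hyz, h0, smul_zero]
      exact sub_eq_zero.1 this
    exact Set.disjoint_left.1 (hDdisj hi' hj' hij) hyi (hyeqz ▸ hyj)
  have hTsub : ∀ i ∈ I, T i ⊆ Ω \ R := by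
    intro i hi w hw
    have hyD : w - ρ • u i ∈ D i := hw
    set y := w - ρ • u i with hydef
    have hyW : y ∈ W := hyD.1.1
    have hwy : w = y + ρ • u i := by rw [hydef]; abel
    constructor
    · apply hyW
      rw [mem_closedBall, dist_eq_norm, hwy]
      have : y + ρ • u i - y = ρ • u i := by abel
      rw [this, norm_smul, hunorm i hi]
      simp [abs_of_pos hρ, hρ.le]
    · obtain ⟨i₀, hi₀I, hi₀⟩ := hviol y
      have hv0 : 0 < v i y := lt_of_lt_of_le ((hvpos y i₀ hi₀I).2 hi₀) (hyD.1.2 i₀ hi₀I)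
      have hbi : b i < inner ℝ (a i) y + ρ * ‖a i‖ := (hvpos y i hi).1 hv0
      intro hwR
      have hle := hwR i
      rw [hwy, inner_add_right, real_inner_smul_right] at hle
      have hiu : (inner ℝ (a i) (u i) : ℝ) = ‖a i‖ := by
        have hai : a i ≠ 0 := by simpa [hIdef] using hi
        have hn : (0:ℝ) < ‖a i‖ := norm_pos_iff.2 hai
        rw [hudef]
        simp only [real_inner_smul_right, real_inner_self_eq_norm_mul_norm]
        field_simp
      rw [hiu] at hle
      linarith
  calc volume W ≤ volume (⋃ i ∈ I, D i) := measure_mono hcover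
    _ = ∑ i ∈ I, volume (D i) := measure_biUnion_finset hDdisj (fun i _ => hDmeas i)
    _ = ∑ i ∈ I, volume (T i) := Finset.sum_congr rfl (fun i _ => (hTvol i).symm)
    _ = volume (⋃ i ∈ I, T i) := (measure_biUnion_finset hTdisj fun i _ => hTmeas i).symm
    _ ≤ volume (Ω \ R) := measure_mono (Set.iUnion₂_subset hTsub)

open Metric Set in
set_option maxHeartbeats 1000000 in
/-- **Lemma (p33).** Let `R ⊆ Ω` be bounded `d`-dimensional convex polytopes in `ℝ^d`.  If `Ω`
contains a ball of radius `r > 0` and `Vol(R)/Vol(Ω) ≥ c > 0`, then `R` contains a ball of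
radius `rc/d`. -/
theorem stmt_8 {d : ℕ} (R Ω : Set (EuclideanSpace ℝ (Fin d)))
    (hR : IsBoundedConvexPolytope R) (hΩ : IsBoundedConvexPolytope Ω)
    (hRint : (interior R).Nonempty) (hΩint : (interior Ω).Nonempty)
    (hsub : R ⊆ Ω)
    {r : ℝ} (hr : 0 < r) (x₀ : EuclideanSpace ℝ (Fin d))
    (hball : Metric.closedBall x₀ r ⊆ Ω)
    {c : ℝ} (hc : 0 < c)
    (hvol : c ≤ (volume R).toReal / (volume Ω).toReal) :
    ∃ y : EuclideanSpace ℝ (Fin d), Metric.closedBall y (r * c / d) ⊆ R := by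
  obtain ⟨hRbd, mR, a, b, hRrep⟩ := hR
  obtain ⟨hΩbd, mΩ, aΩ, bΩ, hΩrep⟩ := hΩ
  rcases Nat.eq_zero_or_pos d with hd0 | hd
  · obtain ⟨y, hy⟩ := hRint
    subst hd0
    refine ⟨y, ?_⟩
    simp only [Nat.cast_zero, div_zero, Metric.closedBall_zero]
    exact Set.singleton_subset_iff.2 (interior_subset hy)
  · set ρ₀ := r * c / d with hρ₀def
    have hd1 : (1:ℝ) ≤ d := by exact_mod_cast hd
    have hdpos : (0:ℝ) < d := by linarith
    have hRcl : IsClosed R := by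
      rw [hRrep]
      have heq : {x : EuclideanSpace ℝ (Fin d) | ∀ i, inner ℝ (a i) x ≤ b i}
          = ⋂ i, {x | inner ℝ (a i) x ≤ b i} := by ext x; simp
      rw [heq]
      exact isClosed_iInter fun i =>
        isClosed_le (Continuous.inner continuous_const continuous_id) continuous_const
    have hΩcl : IsClosed Ω := by
      rw [hΩrep]
      have heq : {x : EuclideanSpace ℝ (Fin d) | ∀ i, inner ℝ (aΩ i) x ≤ bΩ i}
          = ⋂ i, {x | inner ℝ (aΩ i) x ≤ bΩ i} := by ext x; simp
      rw [heq]
      exact isClosed_iInter fun i =>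
        isClosed_le (Continuous.inner continuous_const continuous_id) continuous_const
    have hΩconv : Convex ℝ Ω := by
      rw [hΩrep]
      have heq : {x : EuclideanSpace ℝ (Fin d) | ∀ i, inner ℝ (aΩ i) x ≤ bΩ i}
          = ⋂ i, {x | inner ℝ (aΩ i) x ≤ bΩ i} := by ext x; simp
      rw [heq]
      exact convex_iInter fun i => convex_halfSpace_le
        ⟨fun x y => inner_add_right _ _ _, fun s x => real_inner_smul_right _ _ _⟩ _
    have hRmeas := hRcl.measurableSet
    have hΩvfin : volume Ω < ⊤ := by
      obtain ⟨MΩ, hMΩ⟩ := hΩbd.subset_closedBall 0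
      exact lt_of_le_of_lt (measure_mono hMΩ) measure_closedBall_lt_top
    have hRvfin : volume R < ⊤ := lt_of_le_of_lt (measure_mono hsub) hΩvfin
    have hΩvpos : 0 < volume Ω := Measure.measure_pos_of_nonempty_interior _ hΩint
    set A := (volume Ω).toReal with hAdef
    set B := (volume R).toReal with hBdef
    have hApos : 0 < A := ENNReal.toReal_pos hΩvpos.ne' hΩvfin.ne
    have hBA : B ≤ A := (ENNReal.toReal_le_toReal hRvfin.ne hΩvfin.ne).2 (measure_mono hsub)
    have hcA : c * A ≤ B := by
      have h := (le_div_iff₀ hApos).1 hvol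
      linarith
    have hc1 : c ≤ 1 := by nlinarith
    have hρ₀pos : 0 < ρ₀ := div_pos (mul_pos hr hc) hdpos
    have hρ₀r : ρ₀ ≤ r := by
      rw [hρ₀def, div_le_iff₀ hdpos]
      nlinarith
    by_contra hcon
    rw [not_exists] at hcon
    have hRne : R.Nonempty := hRint.mono interior_subset
    have hRcomp : IsCompact R := Metric.isCompact_of_isClosed_isBounded hRcl hRbd
    obtain ⟨M, hM⟩ := hRbd.subset_closedBall 0
    have hRcne : Rᶜ.Nonempty := by
      refine ⟨EuclideanSpace.single (⟨0, hd⟩ : Fin d) (|M| + 1), fun hmem => ?_⟩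
      have h1 := hM hmem
      rw [mem_closedBall_zero_iff, EuclideanSpace.norm_single, Real.norm_eq_abs,
        abs_of_pos (by positivity : (0:ℝ) < |M| + 1)] at h1
      have := le_abs_self M
      linarith
    have hcont : Continuous fun y : EuclideanSpace ℝ (Fin d) => Metric.infDist y Rᶜ :=
      Metric.continuous_infDist_pt _
    obtain ⟨y₁, hy₁R, hy₁max⟩ := hRcomp.exists_isMaxOn hRne hcont.continuousOn
    set ρ₁ := Metric.infDist y₁ Rᶜ with hρ₁def
    have hρ₁nonneg : 0 ≤ ρ₁ := Metric.infDist_nonneg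
    have hρ₁lt : ρ₁ < ρ₀ := by
      by_contra hge
      push_neg at hge
      apply hcon y₁
      have hball1 : Metric.ball y₁ ρ₀ ⊆ R := by
        intro z hz
        by_contra hzR
        have h2 : Metric.infDist y₁ Rᶜ ≤ dist y₁ z :=
          Metric.infDist_le_dist_of_mem (show z ∈ Rᶜ from hzR)
        rw [Metric.mem_ball'] at hz
        rw [← hρ₁def] at h2
        linarith
      calc Metric.closedBall y₁ ρ₀ = closure (Metric.ball y₁ ρ₀) :=
            (closure_ball y₁ hρ₀pos.ne').symm
        _ ⊆ closure R := closure_mono hball1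
        _ = R := hRcl.closure_eq
    set ρ := (ρ₁ + ρ₀) / 2 with hρdef
    have hρpos : 0 < ρ := by rw [hρdef]; linarith
    have hρltρ₀ : ρ < ρ₀ := by rw [hρdef]; linarith
    have hρ₁ltρ : ρ₁ < ρ := by rw [hρdef]; linarith
    have hρno : ∀ y, ¬ Metric.closedBall y ρ ⊆ R := by
      intro y hyball
      have hyR : y ∈ R := hyball (Metric.mem_closedBall_self hρpos.le)
      have hinf : ρ ≤ Metric.infDist y Rᶜ := by
        by_contra hlt
        push_neg at hlt
        obtain ⟨z, hzRc, hzd⟩ := (Metric.infDist_lt_iff hRcne).1 hlt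
        exact hzRc (hyball (by rw [Metric.mem_closedBall, dist_comm]; exact hzd.le))
      have hle : Metric.infDist y Rᶜ ≤ ρ₁ := hy₁max hyR
      linarith
    have hempty : {y : EuclideanSpace ℝ (Fin d) | ∀ i, inner ℝ (a i) y + ρ * ‖a i‖ ≤ b i} = ∅ := by
      rw [Set.eq_empty_iff_forall_notMem]
      intro y hy
      apply hρno y
      intro z hz
      rw [hRrep]
      intro i
      have hcs : (inner ℝ (a i) (z - y) : ℝ) ≤ ‖a i‖ * ‖z - y‖ := real_inner_le_norm _ _
      have hzy : ‖z - y‖ ≤ ρ := by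
        rw [← dist_eq_norm]; exact Metric.mem_closedBall.1 hz
      have h1 : (inner ℝ (a i) z : ℝ) = inner ℝ (a i) y + inner ℝ (a i) (z - y) := by
        rw [← inner_add_right]; congr 1; abel
      have h2 := hy i
      have h3 : ‖a i‖ * ‖z - y‖ ≤ ‖a i‖ * ρ :=
        mul_le_mul_of_nonneg_left hzy (norm_nonneg _)
      rw [h1]
      nlinarith [norm_nonneg (a i)]
    have hkey := key_erosion a b Ω hΩcl hρpos (hRrep ▸ hRne) hempty
    rw [← hRrep] at hkey
    obtain ⟨t, htdef⟩ : ∃ t : ℝ, t = 1 - ρ / r := ⟨_, rfl⟩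
    have hρr : ρ < r := lt_of_lt_of_le hρltρ₀ hρ₀r
    have htpos : 0 < t := by
      rw [htdef]
      have : ρ / r < 1 := (div_lt_one hr).2 hρr
      linarith
    have ht1 : t < 1 := by
      rw [htdef]
      have : 0 < ρ / r := div_pos hρpos hr
      linarith
    have h1t : (0:ℝ) < 1 - t := by linarith
    have h1teq : 1 - t = ρ / r := by rw [htdef]; ring
    set T : EuclideanSpace ℝ (Fin d) → EuclideanSpace ℝ (Fin d) :=
      fun w => t • w + (1 - t) • x₀ with hTdef
    have hThom : T = AffineMap.homothety x₀ t := by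
      funext w
      rw [hTdef, AffineMap.homothety_apply]
      simp only [vsub_eq_sub, vadd_eq_add]
      module
    have himg : T '' Ω
        ⊆ {y : EuclideanSpace ℝ (Fin d) | Metric.closedBall y ρ ⊆ Ω} := by
      rintro _ ⟨w, hw, rfl⟩
      intro z hz
      set q := x₀ + (1 - t)⁻¹ • (z - T w) with hqdef
      have hq : q ∈ Metric.closedBall x₀ r := by
        rw [Metric.mem_closedBall, hqdef, dist_eq_norm]
        have he : x₀ + (1-t)⁻¹ • (z - T w) - x₀ = (1-t)⁻¹ • (z - T w) := by abel
        rw [he, norm_smul, Real.norm_eq_abs, abs_of_pos (inv_pos.2 h1t)]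
        have hzd : ‖z - T w‖ ≤ ρ := by
          rw [← dist_eq_norm]; exact Metric.mem_closedBall.1 hz
        rw [h1teq, inv_div]
        calc r / ρ * ‖z - T w‖ ≤ r / ρ * ρ :=
              mul_le_mul_of_nonneg_left hzd (by positivity)
          _ = r := by field_simp
      have hzeq : z = t • w + (1 - t) • q := by
        rw [hqdef, smul_add, smul_inv_smul₀ h1t.ne', hTdef]
        module
      rw [hzeq]
      exact hΩconv hw (hball hq) htpos.le (by linarith) (by ring)
    have hvolimg : volume (T '' Ω)
        = ENNReal.ofReal (t ^ d) * volume Ω := by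
      rw [hThom, Measure.addHaar_image_homothety, finrank_euclideanSpace_fin,
        abs_of_pos (pow_pos htpos d)]
    have hWlow : ENNReal.ofReal (t ^ d) * volume Ω
        ≤ volume {y : EuclideanSpace ℝ (Fin d) | Metric.closedBall y ρ ⊆ Ω} := by
      rw [← hvolimg]; exact measure_mono himg
    have hchain := le_trans hWlow hkey
    have hdiff : volume (Ω \ R) = volume Ω - volume R :=
      measure_diff hsub hRmeas.nullMeasurableSet hRvfin.ne
    have hfin2 : volume (Ω \ R) ≠ ⊤ :=
      (lt_of_le_of_lt (measure_mono diff_subset) hΩvfin).ne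
    have hdiffR : (volume (Ω \ R)).toReal = A - B := by
      rw [hdiff, ENNReal.toReal_sub_of_le (measure_mono hsub) hΩvfin.ne, hAdef, hBdef]
    have hreal : t ^ d * A ≤ A - B := by
      have h := ENNReal.toReal_mono hfin2 hchain
      rwa [ENNReal.toReal_mul, ENNReal.toReal_ofReal (by positivity), hdiffR] at h
    have hbern : 1 - d * (ρ / r) ≤ t ^ d := by
      have h2 : (-2:ℝ) ≤ -(ρ/r) := by
        have : ρ / r < 1 := (div_lt_one hr).2 hρr
        linarith
      have h := one_add_mul_le_pow h2 d
      have he : (1 + -(ρ/r)) = t := by rw [htdef]; ring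
      rw [he] at h
      linarith
    have hfinal : B ≤ d * (ρ/r) * A := by nlinarith
    have h1 : c * A ≤ d * (ρ/r) * A := le_trans hcA hfinal
    have h2 : c ≤ d * (ρ/r) := le_of_mul_le_mul_right (by linarith) hApos
    have h3 : d * (ρ/r) < d * (ρ₀/r) :=
      mul_lt_mul_of_pos_left ((div_lt_div_iff_of_pos_right hr).2 hρltρ₀) hdpos
    have h4 : d * (ρ₀/r) = c := by
      rw [hρ₀def]; field_simp
    linarith
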